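/- Let G = G₁ +_A G₂ be the gluing of graphs G₁ and G₂ along a single common vertex A. Suppose the hat guessing games ⟨G₁, h₁, g₁⟩ and ⟨G₂, h₂, g₂⟩ are both losing, with g₁(A) = g₂(A) = s and h₁(A) ≥ h₂(A) = s+1. Then the game ⟨G, h, g⟩ is losing, where h agrees with h₁ on V(G₁), with h₂ on V(G₂)\{A}, h(A) = h₁(A), and g agrees with g₁, g₂ on their respective vertex sets. -/

import Mathlib

/-- A winning strategy in the hat guessing game `⟨G, h, g⟩`: each sage `v` deterministically
outputs at most `g v` guesses depending only on the hat colors of its neighbors, and for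
every hat assignment (with `c v < h v`) some sage's guess set contains its own color. -/
def HatWinning {V : Type*} (G : SimpleGraph V) (h g : V → ℕ) : Prop :=
  ∃ σ : V → (V → ℕ) → Finset ℕ,
    (∀ v c c', (∀ u, G.Adj v u → c u = c' u) → σ v c = σ v c') ∧
    (∀ v c, (σ v c).card ≤ g v) ∧
    ∀ c : V → ℕ, (∀ v, c v < h v) → ∃ v, c v ∈ σ v c

/-- The hat guessing game played by the sages occupying the vertices of `S` only
(the game on the induced subgraph `G[S]`). -/
def HatWinningOn {V : Type*} (G : SimpleGraph V) (S : Set V) (h g : V → ℕ) : Prop :=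
  ∃ σ : V → (V → ℕ) → Finset ℕ,
    (∀ v ∈ S, ∀ c c', (∀ u ∈ S, G.Adj v u → c u = c' u) → σ v c = σ v c') ∧
    (∀ v ∈ S, ∀ c, (σ v c).card ≤ g v) ∧
    ∀ c : V → ℕ, (∀ v ∈ S, c v < h v) → ∃ v ∈ S, c v ∈ σ v c

open scoped Classical in
/-- Glue two colorings: use `e` on `S₁`, `f` outside. -/
noncomputable def glueC {V : Type*} (S₁ : Set V) (e f : V → ℕ) : V → ℕ :=
  fun u => if u ∈ S₁ then e u else f u

open scoped Classical in
/-- Replace the color at `A` by `x`. -/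
noncomputable def patchA {V : Type*} (A : V) (x : ℕ) (f : V → ℕ) : V → ℕ :=
  fun u => if u = A then x else f u

/-- `x` is a "bad" color at `A` relative to the `S₁`-side view `c`: every admissible coloring
of `S₂ \ {A}` (with `A` showing color `x`) either lets some sage of `S₂ \ {A}` guess correctly,
or makes `A`'s guess set contain `x`. -/
def BadP {V : Type*} (S₁ S₂ : Set V) (A : V) (h₂ : V → ℕ)
    (σ : V → (V → ℕ) → Finset ℕ) (c : V → ℕ) (x : ℕ) : Prop :=
  ∀ f : V → ℕ, (∀ v ∈ S₂, v ≠ A → f v < h₂ v) →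
    (∃ v ∈ S₂, v ≠ A ∧ f v ∈ σ v (patchA A x f)) ∨
      x ∈ σ A (glueC S₁ (patchA A x c) f)

/-- Gluing two losing games along a common vertex `A` (with `s` guesses at `A`
in both games, and `A` strong, i.e. of hatness `s+1`, in the second game) yields a losing game.
Here `G₁` has all its edges inside `S₁`, `G₂` inside `S₂`, and `S₁ ∩ S₂ = {A}`, `S₁ ∪ S₂ = V`. -/
theorem glue_losing_games {V : Type*} (G₁ G₂ : SimpleGraph V) (S₁ S₂ : Set V) (A : V) (s : ℕ)
    (hG₁ : ∀ x y, G₁.Adj x y → x ∈ S₁ ∧ y ∈ S₁)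
    (hG₂ : ∀ x y, G₂.Adj x y → x ∈ S₂ ∧ y ∈ S₂)
    (hcap : S₁ ∩ S₂ = {A}) (hcup : S₁ ∪ S₂ = Set.univ)
    (h₁ g₁ h₂ g₂ h g : V → ℕ)
    (hg₁A : g₁ A = s) (hg₂A : g₂ A = s) (hh₂A : h₂ A = s + 1) (hh₁A : s + 1 ≤ h₁ A)
    (hlose₁ : ¬ HatWinningOn G₁ S₁ h₁ g₁) (hlose₂ : ¬ HatWinningOn G₂ S₂ h₂ g₂)
    (hagree₁ : ∀ x ∈ S₁, h x = h₁ x ∧ g x = g₁ x)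
    (hagree₂ : ∀ x ∈ S₂, x ≠ A → h x = h₂ x ∧ g x = g₂ x) :
    ¬ HatWinning (G₁ ⊔ G₂) h g := by
  classical
  rintro ⟨σ, hcons, hcard, hwin⟩
  have hA : A ∈ S₁ ∩ S₂ := by rw [hcap]; exact rfl
  have hA1 : A ∈ S₁ := hA.1
  have hA2 : A ∈ S₂ := hA.2
  have huniq : ∀ {v : V}, v ∈ S₁ → v ∈ S₂ → v = A := by
    intro v hv1 hv2
    have : v ∈ S₁ ∩ S₂ := ⟨hv1, hv2⟩
    rwa [hcap] at this
  have hall : ∀ v : V, v ∈ S₁ ∨ v ∈ S₂ := by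
    intro v
    have : v ∈ S₁ ∪ S₂ := by rw [hcup]; trivial
    exact this
  -- adjacency structure lemmas
  have L1 : ∀ v, v ∈ S₁ → v ≠ A → ∀ u, (G₁ ⊔ G₂).Adj v u → G₁.Adj v u ∧ u ∈ S₁ := by
    intro v hv hne u hadj
    rw [SimpleGraph.sup_adj] at hadj
    rcases hadj with hh | hh
    · exact ⟨hh, (hG₁ v u hh).2⟩
    · exact absurd (huniq hv (hG₂ v u hh).1) hne
  have L2 : ∀ v, v ∈ S₂ → v ≠ A → ∀ u, (G₁ ⊔ G₂).Adj v u → G₂.Adj v u ∧ u ∈ S₂ := by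
    intro v hv hne u hadj
    rw [SimpleGraph.sup_adj] at hadj
    rcases hadj with hh | hh
    · exact absurd (huniq (hG₁ v u hh).1 hv) hne
    · exact ⟨hh, (hG₂ v u hh).2⟩
  have L3 : ∀ u, (G₁ ⊔ G₂).Adj A u →
      u ≠ A ∧ ((G₁.Adj A u ∧ u ∈ S₁) ∨ (G₂.Adj A u ∧ u ∈ S₂ ∧ u ∉ S₁)) := by
    intro u hadj
    have hne : u ≠ A := fun hu => (G₁ ⊔ G₂).irrefl (hu ▸ hadj)
    rw [SimpleGraph.sup_adj] at hadj
    rcases hadj with hh | hh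
    · exact ⟨hne, Or.inl ⟨hh, (hG₁ A u hh).2⟩⟩
    · exact ⟨hne, Or.inr ⟨hh, (hG₂ A u hh).2,
        fun hu1 => hne (huniq hu1 (hG₂ A u hh).2)⟩⟩
  -- key congruence for A's guesses
  have hσA : ∀ (c c' f f' : V → ℕ), (∀ u ∈ S₁, G₁.Adj A u → c u = c' u) →
      (∀ u ∈ S₂, G₂.Adj A u → f u = f' u) → ∀ x y,
      σ A (glueC S₁ (patchA A x c) f) = σ A (glueC S₁ (patchA A y c') f') := by
    intro c c' f f' hc hf x y
    apply hcons
    intro u hadj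
    obtain ⟨hne, hcase⟩ := L3 u hadj
    simp only [glueC, patchA]
    rcases hcase with ⟨h1, hu1⟩ | ⟨h2, hu2, hu1'⟩
    · rw [if_pos hu1, if_pos hu1, if_neg hne, if_neg hne, hc u hu1 h1]
    · rw [if_neg hu1', if_neg hu1', hf u hu2 h2]
  have hBadcongr : ∀ c c' : V → ℕ, (∀ u ∈ S₁, G₁.Adj A u → c u = c' u) → ∀ x,
      BadP S₁ S₂ A h₂ σ c x ↔ BadP S₁ S₂ A h₂ σ c' x := by
    intro c c' hcc x
    unfold BadP
    constructor <;> intro hb f hf <;> rcases hb f hf with hh | hh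
    · exact Or.inl hh
    · exact Or.inr (by rw [← hσA c c' f f hcc (fun _ _ _ => rfl) x x]; exact hh)
    · exact Or.inl hh
    · exact Or.inr (by rw [hσA c c' f f hcc (fun _ _ _ => rfl) x x]; exact hh)
  have hgA : g A = s := by rw [(hagree₁ A hA1).2, hg₁A]
  -- the crucial cardinality bound on bad sets
  have hBadCard : ∀ c : V → ℕ,
      ((Finset.range (h₁ A)).filter (fun x => BadP S₁ S₂ A h₂ σ c x)).card ≤ s := by
    intro c
    by_contra hlt
    push_neg at hlt
    obtain ⟨B, hBsub, hBcard⟩ := Finset.exists_subset_card_eq (n := s + 1) hlt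
    set ψ : Fin (s + 1) ↪o ℕ := B.orderEmbOfFin hBcard with hψ
    set Ψ : ℕ → ℕ := fun n => if hn : n < s + 1 then ψ ⟨n, hn⟩ else 0 with hΨ
    have hΨmem : ∀ n, n < s + 1 → Ψ n ∈ B := by
      intro n hn
      rw [hΨ]
      simp only [dif_pos hn]
      exact Finset.orderEmbOfFin_mem B hBcard ⟨n, hn⟩
    have hΨinj : ∀ m, m < s + 1 → ∀ n, n < s + 1 → Ψ m = Ψ n → m = n := by
      intro m hm n hn hmn
      rw [hΨ] at hmn
      simp only [dif_pos hm, dif_pos hn] at hmn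
      exact congrArg Fin.val (ψ.injective hmn)
    have hΨbad : ∀ n, n < s + 1 → BadP S₁ S₂ A h₂ σ c (Ψ n) := by
      intro n hn
      exact (Finset.mem_filter.1 (hBsub (hΨmem n hn))).2
    apply hlose₂
    refine ⟨fun v d => if v = A then
        (Finset.range (s + 1)).filter
          (fun i => Ψ i ∈ σ A (glueC S₁ (patchA A 0 c) d))
      else σ v (patchA A (Ψ (d A)) d), ?_, ?_, ?_⟩
    · -- consistency
      intro v hv d d' hdd'
      beta_reduce
      by_cases hvA : v = A
      · rw [if_pos hvA, if_pos hvA]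
        rw [hvA] at hdd'
        rw [hσA c c d d' (fun _ _ _ => rfl) hdd' 0 0]
      · rw [if_neg hvA, if_neg hvA]
        apply hcons
        intro u hadj
        obtain ⟨h2, hu2⟩ := L2 v hv hvA u hadj
        simp only [patchA]
        by_cases huA : u = A
        · rw [if_pos huA, if_pos huA, hdd' A hA2 (huA ▸ h2)]
        · rw [if_neg huA, if_neg huA, hdd' u hu2 h2]
    · -- cards
      intro v hv d
      beta_reduce
      by_cases hvA : v = A
      · rw [if_pos hvA, hvA, hg₂A]
        have hle : ((Finset.range (s + 1)).filter
            (fun i => Ψ i ∈ σ A (glueC S₁ (patchA A 0 c) d))).card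
            ≤ (σ A (glueC S₁ (patchA A 0 c) d)).card := by
          apply Finset.card_le_card_of_injOn Ψ
          · intro i hi
            exact (Finset.mem_filter.1 hi).2
          · intro i hi j hj hij
            have hi' : i < s + 1 := Finset.mem_range.1 (Finset.mem_filter.1 hi).1
            have hj' : j < s + 1 := Finset.mem_range.1 (Finset.mem_filter.1 hj).1
            exact hΨinj i hi' j hj' hij
        exact hle.trans (le_of_le_of_eq (hcard A _) hgA)
      · rw [if_neg hvA]
        exact le_of_le_of_eq (hcard v _) (hagree₂ v hv hvA).2
    · -- winning
      intro d hd
      have hdA : d A < s + 1 := by rw [← hh₂A]; exact hd A hA2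
      rcases hΨbad (d A) hdA d (fun v hv _ => hd v hv) with ⟨v, hv, hne, hwin'⟩ | hAwin
      · refine ⟨v, hv, ?_⟩
        beta_reduce
        rw [if_neg hne]
        exact hwin'
      · refine ⟨A, hA2, ?_⟩
        beta_reduce
        rw [if_pos rfl]
        refine Finset.mem_filter.2 ⟨Finset.mem_range.2 hdA, ?_⟩
        rw [hσA c c d d (fun _ _ _ => rfl) (fun _ _ _ => rfl) 0 (Ψ (d A))]
        exact hAwin
  -- now build a winning strategy for game 1, contradiction
  apply hlose₁
  refine ⟨fun v d => if v = A then
      (Finset.range (h₁ A)).filter (fun x => BadP S₁ S₂ A h₂ σ d x)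
    else σ v (glueC S₁ d (fun _ => 0)), ?_, ?_, ?_⟩
  · -- consistency
    intro v hv d d' hdd'
    beta_reduce
    by_cases hvA : v = A
    · rw [if_pos hvA, if_pos hvA]
      rw [hvA] at hdd'
      ext x
      simp only [Finset.mem_filter]
      exact and_congr_right fun _ => hBadcongr d d' hdd' x
    · rw [if_neg hvA, if_neg hvA]
      apply hcons
      intro u hadj
      obtain ⟨h1, hu1⟩ := L1 v hv hvA u hadj
      simp only [glueC]
      rw [if_pos hu1, if_pos hu1, hdd' u hu1 h1]
  · -- cards
    intro v hv d
    beta_reduce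
    by_cases hvA : v = A
    · rw [if_pos hvA, hvA, hg₁A]
      exact hBadCard d
    · rw [if_neg hvA]
      exact le_of_le_of_eq (hcard v _) (hagree₁ v hv).2
  · -- winning
    intro e he
    by_cases hbad : BadP S₁ S₂ A h₂ σ e (e A)
    · refine ⟨A, hA1, ?_⟩
      beta_reduce
      rw [if_pos rfl]
      exact Finset.mem_filter.2 ⟨Finset.mem_range.2 (he A hA1), hbad⟩
    · unfold BadP at hbad
      push_neg at hbad
      obtain ⟨f, hf, hf2, hf3⟩ := hbad
      have hpe : patchA A (e A) e = e := by
        funext u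
        simp only [patchA]
        by_cases huA : u = A
        · rw [if_pos huA, huA]
        · rw [if_neg huA]
      rw [hpe] at hf3
      have hMbound : ∀ v, glueC S₁ e f v < h v := by
        intro v
        by_cases hv1 : v ∈ S₁
        · simp only [glueC]
          rw [if_pos hv1, (hagree₁ v hv1).1]
          exact he v hv1
        · have hv2 : v ∈ S₂ := (hall v).resolve_left hv1
          have hvA : v ≠ A := fun hh => hv1 (hh ▸ hA1)
          simp only [glueC]
          rw [if_neg hv1, (hagree₂ v hv2 hvA).1]
          exact hf v hv2 hvA
      obtain ⟨v, hvwin⟩ := hwin (glueC S₁ e f) hMbound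
      by_cases hv1 : v ∈ S₁
      · by_cases hvA : v = A
        · exfalso
          apply hf3
          rw [hvA] at hvwin
          have hMA : glueC S₁ e f A = e A := by
            simp only [glueC]
            rw [if_pos hA1]
          rwa [hMA] at hvwin
        · refine ⟨v, hv1, ?_⟩
          beta_reduce
          rw [if_neg hvA]
          have hMv : glueC S₁ e f v = e v := by
            simp only [glueC]
            rw [if_pos hv1]
          have hσeq : σ v (glueC S₁ e f) = σ v (glueC S₁ e (fun _ => 0)) := by
            apply hcons
            intro u hadj
            obtain ⟨_, hu1⟩ := L1 v hv1 hvA u hadj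
            simp only [glueC]
            rw [if_pos hu1, if_pos hu1]
          rw [← hσeq, ← hMv]
          exact hvwin
      · exfalso
        have hv2 : v ∈ S₂ := (hall v).resolve_left hv1
        have hvA : v ≠ A := fun hh => hv1 (hh ▸ hA1)
        apply hf2 v hv2 hvA
        have hMv : glueC S₁ e f v = f v := by
          simp only [glueC]
          rw [if_neg hv1]
        have hσeq : σ v (glueC S₁ e f) = σ v (patchA A (e A) f) := by
          apply hcons
          intro u hadj
          obtain ⟨h2, hu2⟩ := L2 v hv2 hvA u hadj
          simp only [glueC, patchA]
          by_cases huA : u = A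
          · rw [if_pos (huA ▸ hA1 : u ∈ S₁), if_pos huA, huA]
          · have hu1 : u ∉ S₁ := fun hh => huA (huniq hh hu2)
            rw [if_neg hu1, if_neg huA]
        rw [← hσeq, ← hMv]
        exact hvwin
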